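/- There exists a family of graphs and initial colorings for which Persistent Decentralized Coloring with adversarial start and random order requires Ω(nΔ) expected recolorings: on the complete bipartite graph K_{Δ,Δ} with all left vertices colored green and the right vertices using Δ distinct colors including green, the expected total number of recolorings is at least c·Δ² for an absolute constant c > 0. -/

import Mathlib

/-- Vertex `v` is conflicted under `χ`: some neighbor shares its color. -/
def Conflicted {V : Type*} {D : ℕ} (G : SimpleGraph V) (χ : V → Fin D) (v : V) : Prop :=
  ∃ u, G.Adj v u ∧ χ u = χ v

/-- Advance the processing position past unconflicted vertices: starting from position
`k` in the order `σ`, return the first position `≥ k` whose vertex is currently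
conflicted, or `n` if there is none. -/
noncomputable def advance {V : Type*} {D : ℕ} (G : SimpleGraph V) (n : ℕ)
    (σ : Fin n ≃ V) (χ : V → Fin D) (k : ℕ) : ℕ :=
  if h : k < n then
    letI : Decidable (Conflicted G χ (σ ⟨k, h⟩)) := Classical.propDecidable _
    if Conflicted G χ (σ ⟨k, h⟩) then k else advance G n σ χ (k + 1)
  else k
termination_by n - k
decreasing_by omega

/-- One recoloring step of Persistent Decentralized Coloring: advance to the currently
processed (conflicted) vertex and give it the (random) color `c`; if every remaining
vertex is unconflicted, do nothing.  The state is (current coloring, current position). -/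
noncomputable def pStep {V : Type*} {D : ℕ} (G : SimpleGraph V) (n : ℕ)
    (σ : Fin n ≃ V) (s : (V → Fin D) × ℕ) (c : Fin D) : (V → Fin D) × ℕ :=
  let k := advance G n σ s.1 s.2
  if h : k < n then
    letI : DecidableEq V := Classical.decEq V
    (Function.update s.1 (σ ⟨k, h⟩) c, k)
  else s

/-- The state of the process after consuming the list `l` of random colors. -/
noncomputable def pRun {V : Type*} {D : ℕ} (G : SimpleGraph V) (n : ℕ)
    (σ : Fin n ≃ V) (χ0 : V → Fin D) (l : List (Fin D)) : (V → Fin D) × ℕ :=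
  l.foldl (pStep G n σ) (χ0, 0)

/-- The (advanced) processing position after consuming `l`; it equals `n` iff the
process has terminated within `l`. -/
noncomputable def pPos {V : Type*} {D : ℕ} (G : SimpleGraph V) (n : ℕ)
    (σ : Fin n ≃ V) (χ0 : V → Fin D) (l : List (Fin D)) : ℕ :=
  advance G n σ (pRun G n σ χ0 l).1 (pRun G n σ χ0 l).2

/-- The expected total number of recolorings of Persistent Decentralized Coloring with
order `σ` and initial coloring `χ0`, expressed as `∑_{t≥0} P(more than t recolorings)`,
the probability being over the `t` uniformly random colors consumed so far. -/
noncomputable def expectedTotal {V : Type*} {D : ℕ} (G : SimpleGraph V) (n : ℕ)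
    (σ : Fin n ≃ V) (χ0 : V → Fin D) : ℝ :=
  ∑' t : ℕ, (Nat.card {f : Fin t → Fin D // pPos G n σ χ0 (List.ofFn f) ≠ n} : ℝ)
    / (D : ℝ) ^ t

/-- The expected number of recolorings performed by the vertex `v`, expressed as
`∑_{t≥0} P(the (t+1)-st random color is consumed by v)`. -/
noncomputable def expectedRecolors {V : Type*} {D : ℕ} (G : SimpleGraph V) (n : ℕ)
    (σ : Fin n ≃ V) (χ0 : V → Fin D) (v : V) : ℝ :=
  ∑' t : ℕ, (Nat.card {f : Fin t → Fin D //
      pPos G n σ χ0 (List.ofFn f) = (σ.symm v : ℕ)} : ℝ) / (D : ℝ) ^ t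

namespace PDC

variable {V : Type*} {D : ℕ} (G : SimpleGraph V) {n : ℕ} (σ : Fin n ≃ V)

lemma advance_eq_of (χ : V → Fin D) :
    ∀ d j, ∀ ht : j + d < n,
    (∀ p (hp : p < n), j ≤ p → p < j + d → ¬ Conflicted G χ (σ ⟨p, hp⟩)) →
    Conflicted G χ (σ ⟨j + d, ht⟩) → advance G n σ χ j = j + d := by
  intro d
  induction d with
  | zero =>
    intro j ht _ hc
    simp only [Nat.add_zero] at ht hc ⊢
    rw [advance]; rw [dif_pos ht, if_pos hc]
  | succ d ih =>
    intro j ht hmid hc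
    have hjn : j < n := by omega
    have h1 : ¬ Conflicted G χ (σ ⟨j, hjn⟩) := hmid j hjn le_rfl (by omega)
    rw [advance, dif_pos hjn, if_neg h1]
    have he : (⟨j + 1 + d, by omega⟩ : Fin n) = (⟨j + (d + 1), ht⟩ : Fin n) := by
      simp only [Fin.mk.injEq]; omega
    have := ih (j + 1) (by omega)
      (fun p hp h1 h2 => hmid p hp (by omega) (by omega)) (by rw [he]; exact hc)
    rw [this]; omega

lemma advance_eq_n (χ : V → Fin D) :
    ∀ d j, j + d = n →
    (∀ p (hp : p < n), j ≤ p → ¬ Conflicted G χ (σ ⟨p, hp⟩)) →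
    advance G n σ χ j = n := by
  intro d
  induction d with
  | zero =>
    intro j hj _
    rw [advance, dif_neg (by omega)]; omega
  | succ d ih =>
    intro j hj hmid
    have hjn : j < n := by omega
    rw [advance, dif_pos hjn, if_neg (hmid j hjn le_rfl)]
    exact ih (j + 1) (by omega) (fun p hp h1 => hmid p hp (by omega))

lemma advance_eq_n' (χ : V → Fin D) {j : ℕ} (hj : j ≤ n)
    (hmid : ∀ v, ¬ Conflicted G χ v) : advance G n σ χ j = n :=
  advance_eq_n G σ χ (n - j) j (by omega) (fun p hp _ => hmid _)

lemma pStep_of_term (s : (V → Fin D) × ℕ) (h : advance G n σ s.1 s.2 = n)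
    (c : Fin D) : pStep G n σ s c = s := by
  unfold pStep
  simp only [h, lt_self_iff_false, dite_false]

lemma pRun_append (χ0 : V → Fin D) (l l' : List (Fin D)) :
    pRun G n σ χ0 (l ++ l') = l'.foldl (pStep G n σ) (pRun G n σ χ0 l) :=
  List.foldl_append

lemma pRun_concat (χ0 : V → Fin D) (l : List (Fin D)) (c : Fin D) :
    pRun G n σ χ0 (l ++ [c]) = pStep G n σ (pRun G n σ χ0 l) c :=
  pRun_append G σ χ0 l [c]

lemma pPos_append_of_term (χ0 : V → Fin D) {l : List (Fin D)}
    (h : pPos G n σ χ0 l = n) (l' : List (Fin D)) :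
    pPos G n σ χ0 (l ++ l') = n := by
  induction l' using List.reverseRecOn with
  | nil => simpa using h
  | append_singleton l'' c ih =>
    unfold pPos at ih ⊢
    rw [← List.append_assoc, pRun_concat, pStep_of_term _ _ _ ih, ih]


lemma advance_eq_of' {χ : V → Fin D} {j t : ℕ} (hjt : j ≤ t) (ht : t < n)
    (hmid : ∀ p (hp : p < n), j ≤ p → p < t → ¬ Conflicted G χ (σ ⟨p, hp⟩))
    (hc : Conflicted G χ (σ ⟨t, ht⟩)) : advance G n σ χ j = t := by
  obtain ⟨d, rfl⟩ := Nat.exists_eq_add_of_le hjt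
  exact advance_eq_of G σ χ d j ht hmid hc

end PDC

namespace PDC

section Main

variable {Δ : ℕ}

variable (Δ) in
abbrev BG : SimpleGraph (Fin Δ ⊕ Fin Δ) := completeBipartiteGraph (Fin Δ) (Fin Δ)

variable (Δ) in
def chi0 : Fin Δ ⊕ Fin Δ → Fin (Δ + 1) :=
  Sum.elim (fun _ => (0 : Fin (Δ + 1))) (fun i => i.castSucc)

lemma conflicted_inl_iff {D : ℕ} (χ : Fin Δ ⊕ Fin Δ → Fin D) (x : Fin Δ) :
    Conflicted (BG Δ) χ (.inl x) ↔ ∃ i, χ (.inr i) = χ (.inl x) := by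
  constructor
  · rintro ⟨u, hadj, hc⟩
    rcases u with y | i
    · simp [completeBipartiteGraph] at hadj
    · exact ⟨i, hc⟩
  · rintro ⟨i, h⟩
    exact ⟨.inr i, by simp [completeBipartiteGraph], h⟩

lemma conflicted_inr_iff {D : ℕ} (χ : Fin Δ ⊕ Fin Δ → Fin D) (i : Fin Δ) :
    Conflicted (BG Δ) χ (.inr i) ↔ ∃ x, χ (.inl x) = χ (.inr i) := by
  constructor
  · rintro ⟨u, hadj, hc⟩
    rcases u with y | j
    · exact ⟨y, hc⟩
    · simp [completeBipartiteGraph] at hadj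
  · rintro ⟨x, h⟩
    exact ⟨.inl x, by simp [completeBipartiteGraph], h⟩

variable (σ : Fin (2 * Δ) ≃ (Fin Δ ⊕ Fin Δ))

def lemb : Fin Δ ↪ Fin (2 * Δ) :=
  ⟨fun x => σ.symm (.inl x), fun a b h => by simpa using σ.symm.injective h⟩

def P : Finset (Fin (2 * Δ)) := Finset.univ.map (lemb σ)

lemma P_card : (P σ).card = Δ := by simp [P]

lemma mem_P {p : Fin (2 * Δ)} : p ∈ P σ ↔ (σ p).isLeft := by
  simp only [P, Finset.mem_map, Finset.mem_univ, true_and, lemb,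
    Function.Embedding.coeFn_mk]
  constructor
  · rintro ⟨x, rfl⟩; show (σ (σ.symm (.inl x))).isLeft; simp
  · intro h
    rcases hσ : σ p with x | x
    · exact ⟨x, show σ.symm (.inl x) = p by rw [← hσ]; simp⟩
    · rw [hσ] at h; simp at h

noncomputable def qI : Fin Δ ≃o {x : Fin (2 * Δ) // x ∈ P σ} :=
  (P σ).orderIsoOfFin (P_card σ)

noncomputable def q (j : Fin Δ) : Fin (2 * Δ) := (qI σ j : Fin (2 * Δ))

lemma q_mem (j : Fin Δ) : q σ j ∈ P σ := (qI σ j).2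

lemma q_lt_q {j j' : Fin Δ} : q σ j < q σ j' ↔ j < j' := by
  rw [q, q]
  exact Iff.trans Subtype.coe_lt_coe ((qI σ).lt_iff_lt)

lemma q_injective : Function.Injective (q σ) :=
  fun a b h => by
    rcases lt_trichotomy a b with h' | h' | h'
    · exact absurd h (ne_of_lt ((q_lt_q σ).2 h'))
    · exact h'
    · exact absurd h.symm (ne_of_lt ((q_lt_q σ).2 h'))

lemma isLeft_σ_q (j : Fin Δ) : (σ (q σ j)).isLeft := (mem_P σ).1 (q_mem σ j)

noncomputable def idx (x : Fin Δ) : Fin Δ :=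
  (qI σ).symm ⟨σ.symm (.inl x), by rw [mem_P]; simp⟩

lemma q_idx (x : Fin Δ) : q σ (idx σ x) = σ.symm (.inl x) := by
  simp [q, idx]

lemma σ_q_idx (x : Fin Δ) : σ (q σ (idx σ x)) = .inl x := by rw [q_idx]; simp

lemma idx_injective : Function.Injective (idx σ) := fun a b h => by
  have h2 : σ.symm (.inl a) = σ.symm (.inl b) := by
    rw [← q_idx σ a, ← q_idx σ b, h]
  simpa using σ.symm.injective h2

lemma exists_lx (j : Fin Δ) : ∃ x, σ (q σ j) = .inl x ∧ idx σ x = j := by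
  obtain ⟨x, hx⟩ := Finite.injective_iff_surjective.mp (idx_injective σ) j
  exact ⟨x, by rw [← hx, σ_q_idx], hx⟩

variable (hΔ : 0 < Δ)

def r0 : Fin (2 * Δ) := σ.symm (.inr ⟨0, hΔ⟩)

lemma σ_r0 : σ (r0 σ hΔ) = .inr ⟨0, hΔ⟩ := by simp [r0]

lemma r0_not_mem : r0 σ hΔ ∉ P σ := by rw [mem_P, σ_r0]; simp

def L : ℕ := ((P σ).filter (fun p => p < r0 σ hΔ)).card

lemma L_le : L σ hΔ ≤ Δ :=
  le_trans (Finset.card_filter_le _ _) (le_of_eq (P_card σ))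

lemma q_lt_r0_iff (j : Fin Δ) : q σ j < r0 σ hΔ ↔ (j : ℕ) < L σ hΔ := by
  classical
  set S : Finset (Fin Δ) := Finset.univ.filter (fun j => q σ j < r0 σ hΔ) with hS
  have hcard : S.card = L σ hΔ := by
    rw [L]
    apply Finset.card_bij (fun j _ => q σ j)
    · intro a ha
      simp only [hS, Finset.mem_filter, Finset.mem_univ, true_and] at ha
      exact Finset.mem_filter.2 ⟨q_mem σ a, ha⟩
    · intro a _ b _ h; exact q_injective σ h
    · intro p hp
      rw [Finset.mem_filter] at hp
      refine ⟨(qI σ).symm ⟨p, hp.1⟩, ?_, ?_⟩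
      · rw [hS]
        refine Finset.mem_filter.2 ⟨Finset.mem_univ _, ?_⟩
        show ((qI σ ((qI σ).symm ⟨p, hp.1⟩) : Fin (2 * Δ))) < r0 σ hΔ
        rw [OrderIso.apply_symm_apply]
        exact hp.2
      · simp [q]
  have hdc : ∀ j j' : Fin Δ, j' ≤ j → j ∈ S → j' ∈ S := by
    intro j j' hle hj
    simp only [hS, Finset.mem_filter, Finset.mem_univ, true_and] at hj ⊢
    rcases eq_or_lt_of_le hle with rfl | h
    · exact hj
    · exact lt_trans ((q_lt_q σ).2 h) hj
  have key : ∀ j : Fin Δ, j ∈ S ↔ (j : ℕ) < S.card := by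
    intro j
    constructor
    · intro hj
      have hsub : Finset.Iic j ⊆ S := fun k hk =>
        hdc j k (Finset.mem_Iic.1 hk) hj
      have := Finset.card_le_card hsub
      rw [Fin.card_Iic] at this
      omega
    · intro hj
      by_contra hjS
      have hsub : S ⊆ Finset.Iio j := by
        intro k hk
        rw [Finset.mem_Iio]
        by_contra hkj
        exact hjS (hdc k j (le_of_not_gt hkj) hk)
      have := Finset.card_le_card hsub
      rw [Fin.card_Iio] at this
      omega
  rw [← hcard, ← key]
  simp [hS]

lemma r0_lt_q {j : Fin Δ} (h : L σ hΔ ≤ (j : ℕ)) : r0 σ hΔ < q σ j := by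
  rcases lt_trichotomy (r0 σ hΔ) (q σ j) with h' | h' | h'
  · exact h'
  · exact absurd (h' ▸ q_mem σ j) (r0_not_mem σ hΔ)
  · rw [q_lt_r0_iff] at h'; omega

/-! ### Colorings -/

noncomputable def chiL (m : ℕ) (pc : Fin (Δ + 1)) : Fin Δ ⊕ Fin Δ → Fin (Δ + 1) :=
  Sum.elim
    (fun x => if (idx σ x : ℕ) < m then Fin.last Δ
      else if (idx σ x : ℕ) = m then pc else 0)
    (fun i => i.castSucc)

noncomputable def chiR (c : Fin (Δ + 1)) : Fin Δ ⊕ Fin Δ → Fin (Δ + 1) :=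
  Sum.elim
    (fun x => if (idx σ x : ℕ) < L σ hΔ then Fin.last Δ else 0)
    (fun i => if i = ⟨0, hΔ⟩ then c else i.castSucc)

lemma castSucc_ne_last (i : Fin Δ) : (i.castSucc : Fin (Δ + 1)) ≠ Fin.last Δ :=
  ne_of_lt (Fin.castSucc_lt_last i)

lemma zero_ne_last (hΔ : 0 < Δ) : (0 : Fin (Δ + 1)) ≠ Fin.last Δ := by
  intro h
  have := congrArg Fin.val h
  simp only [Fin.val_zero, Fin.val_last] at this
  omega

lemma castSucc_eq_zero_iff (i : Fin Δ) (hΔ : 0 < Δ) :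
    (i.castSucc : Fin (Δ + 1)) = 0 ↔ i = ⟨0, hΔ⟩ := by
  rw [Fin.ext_iff, Fin.ext_iff]
  simp

lemma exists_castSucc_eq {pc : Fin (Δ + 1)} (hpc : pc ≠ Fin.last Δ) :
    ∃ i : Fin Δ, (i.castSucc : Fin (Δ + 1)) = pc := by
  have : (pc : ℕ) < Δ := by
    rcases lt_or_eq_of_le (Nat.lt_succ_iff.mp pc.isLt) with h | h
    · exact h
    · exact absurd (Fin.ext h) hpc
  exact ⟨⟨pc, this⟩, Fin.ext (by simp)⟩

/-! ### Conflictedness facts for `chiL` -/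

lemma chiL_not_conflicted_left {m : ℕ} {pc : Fin (Δ + 1)} {x : Fin Δ}
    (hx : (idx σ x : ℕ) < m) : ¬ Conflicted (BG Δ) (chiL σ m pc) (.inl x) := by
  rw [conflicted_inl_iff]
  rintro ⟨i, hi⟩
  simp only [chiL, Sum.elim_inl, Sum.elim_inr, if_pos hx] at hi
  exact castSucc_ne_last i hi

lemma chiL_conflicted_cur {m : ℕ} {pc : Fin (Δ + 1)} (hpc : pc ≠ Fin.last Δ)
    {x : Fin Δ} (hx : (idx σ x : ℕ) = m) :
    Conflicted (BG Δ) (chiL σ m pc) (.inl x) := by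
  rw [conflicted_inl_iff]
  obtain ⟨i, hi⟩ := exists_castSucc_eq hpc
  refine ⟨i, ?_⟩
  simp only [chiL, Sum.elim_inl, Sum.elim_inr, hx, lt_irrefl, if_neg (lt_irrefl m),
    if_pos rfl]
  exact hi

lemma chiL_not_conflicted_right {m : ℕ} {i : Fin Δ} (hi : i ≠ ⟨0, hΔ⟩) :
    ¬ Conflicted (BG Δ) (chiL σ m 0) (.inr i) := by
  rw [conflicted_inr_iff]
  rintro ⟨x, hx⟩
  simp only [chiL, Sum.elim_inl, Sum.elim_inr] at hx
  split_ifs at hx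
  · exact castSucc_ne_last i hx.symm
  · exact hi (((castSucc_eq_zero_iff i hΔ).1 hx.symm))
  · exact hi (((castSucc_eq_zero_iff i hΔ).1 hx.symm))

lemma chiL_all_unconflicted (pc : Fin (Δ + 1)) (v : Fin Δ ⊕ Fin Δ) :
    ¬ Conflicted (BG Δ) (chiL σ Δ pc) v := by
  rcases v with x | i
  · exact chiL_not_conflicted_left σ (idx σ x).isLt
  · rw [conflicted_inr_iff]
    rintro ⟨x, hx⟩
    simp only [chiL, Sum.elim_inl, Sum.elim_inr, if_pos (idx σ x).isLt] at hx
    exact castSucc_ne_last i hx.symm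

/-! ### Conflictedness facts for `chiR` -/

lemma chiR_not_conflicted_left {c : Fin (Δ + 1)} (hc : c ≠ Fin.last Δ)
    {x : Fin Δ} (hx : (idx σ x : ℕ) < L σ hΔ) :
    ¬ Conflicted (BG Δ) (chiR σ hΔ c) (.inl x) := by
  rw [conflicted_inl_iff]
  rintro ⟨i, hi⟩
  simp only [chiR, Sum.elim_inl, Sum.elim_inr, if_pos hx] at hi
  split_ifs at hi
  · exact hc hi
  · exact castSucc_ne_last i hi

lemma chiR_not_conflicted_right {c : Fin (Δ + 1)} {i : Fin Δ} (hi : i ≠ ⟨0, hΔ⟩) :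
    ¬ Conflicted (BG Δ) (chiR σ hΔ c) (.inr i) := by
  rw [conflicted_inr_iff]
  rintro ⟨x, hx⟩
  simp only [chiR, Sum.elim_inl, Sum.elim_inr, if_neg hi] at hx
  split_ifs at hx
  · exact castSucc_ne_last i hx.symm
  · exact hi ((castSucc_eq_zero_iff i hΔ).1 hx.symm)

lemma chiR_conflicted_r0_zero (hL : L σ hΔ < Δ) :
    Conflicted (BG Δ) (chiR σ hΔ 0) (.inr ⟨0, hΔ⟩) := by
  rw [conflicted_inr_iff]
  obtain ⟨x, hx⟩ := Finite.injective_iff_surjective.mp (idx_injective σ) ⟨L σ hΔ, hL⟩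
  refine ⟨x, ?_⟩
  simp [chiR, hx]

lemma chiR_conflicted_r0_last (hL : 1 ≤ L σ hΔ) :
    Conflicted (BG Δ) (chiR σ hΔ (Fin.last Δ)) (.inr ⟨0, hΔ⟩) := by
  rw [conflicted_inr_iff]
  obtain ⟨x, hx⟩ := Finite.injective_iff_surjective.mp (idx_injective σ) ⟨0, hΔ⟩
  refine ⟨x, ?_⟩
  have : (idx σ x : ℕ) < L σ hΔ := by rw [hx]; exact hL
  simp [chiR, this]

lemma chiR_all_unconflicted {c : Fin (Δ + 1)} (hc0 : c ≠ 0)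
    (hcl : c = Fin.last Δ → L σ hΔ = 0) (v : Fin Δ ⊕ Fin Δ) :
    ¬ Conflicted (BG Δ) (chiR σ hΔ c) v := by
  rcases v with x | i
  · rw [conflicted_inl_iff]
    rintro ⟨i, hi⟩
    simp only [chiR, Sum.elim_inl, Sum.elim_inr] at hi
    by_cases hx : (idx σ x : ℕ) < L σ hΔ
    · rw [if_pos hx] at hi
      split_ifs at hi
      · rw [hcl hi] at hx; omega
      · exact castSucc_ne_last i hi
    · rw [if_neg hx] at hi
      split_ifs at hi with h
      · exact hc0 hi
      · exact h ((castSucc_eq_zero_iff i hΔ).1 hi)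
  · rw [conflicted_inr_iff]
    rintro ⟨x, hx⟩
    simp only [chiR, Sum.elim_inl, Sum.elim_inr] at hx
    by_cases hi : i = ⟨0, hΔ⟩
    · rw [if_pos hi] at hx
      split_ifs at hx with h
      · rw [hcl hx.symm] at h; omega
      · exact hc0 hx.symm
    · rw [if_neg hi] at hx
      split_ifs at hx
      · exact castSucc_ne_last i hx.symm
      · exact hi ((castSucc_eq_zero_iff i hΔ).1 hx.symm)

/-! ### Advance computations -/

lemma advance_chiL {m : Fin Δ} {pc : Fin (Δ + 1)} (hm : (m : ℕ) < L σ hΔ)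
    (hpc : pc ≠ Fin.last Δ) {pos : ℕ}
    (hpos : (pc = 0 ∧ pos ≤ (q σ m : ℕ)) ∨ pos = (q σ m : ℕ)) :
    advance (BG Δ) (2 * Δ) σ (chiL σ (m : ℕ) pc) pos = (q σ m : ℕ) := by
  obtain ⟨xm, hx1, hx2⟩ := exists_lx σ m
  have hlt : ((q σ m : ℕ)) < 2 * Δ := (q σ m).isLt
  have hconf : Conflicted (BG Δ) (chiL σ (m : ℕ) pc) (σ ⟨(q σ m : ℕ), hlt⟩) := by
    rw [Fin.eta, hx1]
    exact chiL_conflicted_cur σ hpc (by rw [hx2])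
  rcases hpos with ⟨rfl, hle⟩ | rfl
  · refine advance_eq_of' _ σ hle hlt ?_ hconf
    intro p hp h1 h2
    rcases hσp : σ ⟨p, hp⟩ with y | i
    · have hq : q σ (idx σ y) = ⟨p, hp⟩ := by
        rw [q_idx]
        exact (Equiv.symm_apply_eq σ).2 hσp.symm
      have hlt2 : q σ (idx σ y) < q σ m := by
        rw [hq]; exact Fin.lt_def.2 h2
      exact chiL_not_conflicted_left σ ((q_lt_q σ).1 hlt2)
    · have hi : i ≠ ⟨0, hΔ⟩ := by
        intro hi0
        have : (⟨p, hp⟩ : Fin (2 * Δ)) = r0 σ hΔ := by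
          rw [r0, ← hi0, Equiv.eq_symm_apply]; exact hσp
        have hqr : q σ m < r0 σ hΔ := (q_lt_r0_iff σ hΔ m).2 hm
        rw [← this] at hqr
        have := Fin.lt_def.1 hqr
        simp only [Fin.val_mk] at this
        omega
      exact chiL_not_conflicted_right σ hΔ hi
  · refine advance_eq_of' _ σ le_rfl hlt ?_ hconf
    intro p hp h1 h2; omega

lemma advance_chiR {c : Fin (Δ + 1)} (hL : L σ hΔ < Δ) {pos : ℕ}
    (hcond : (c = 0 ∧ pos ≤ (r0 σ hΔ : ℕ)) ∨
      (c = Fin.last Δ ∧ 1 ≤ L σ hΔ ∧ pos = (r0 σ hΔ : ℕ))) :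
    advance (BG Δ) (2 * Δ) σ (chiR σ hΔ c) pos = (r0 σ hΔ : ℕ) := by
  have hlt : ((r0 σ hΔ : ℕ)) < 2 * Δ := (r0 σ hΔ).isLt
  rcases hcond with ⟨rfl, hle⟩ | ⟨rfl, hL1, rfl⟩
  · have hconf : Conflicted (BG Δ) (chiR σ hΔ 0) (σ ⟨(r0 σ hΔ : ℕ), hlt⟩) := by
      rw [Fin.eta, σ_r0]
      exact chiR_conflicted_r0_zero σ hΔ hL
    refine advance_eq_of' _ σ hle hlt ?_ hconf
    intro p hp h1 h2
    rcases hσp : σ ⟨p, hp⟩ with y | i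
    · have hq : q σ (idx σ y) = ⟨p, hp⟩ := by
        rw [q_idx]
        exact (Equiv.symm_apply_eq σ).2 hσp.symm
      have hlt2 : q σ (idx σ y) < r0 σ hΔ := by
        rw [hq]; exact Fin.lt_def.2 h2
      exact chiR_not_conflicted_left σ hΔ (zero_ne_last hΔ)
        ((q_lt_r0_iff σ hΔ _).1 hlt2)
    · have hi : i ≠ ⟨0, hΔ⟩ := by
        intro hi0
        have : (⟨p, hp⟩ : Fin (2 * Δ)) = r0 σ hΔ := by
          rw [r0, ← hi0, Equiv.eq_symm_apply]; exact hσp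
        rw [Fin.ext_iff] at this
        simp only [Fin.val_mk] at this
        omega
      exact chiR_not_conflicted_right σ hΔ hi
  · have hconf : Conflicted (BG Δ) (chiR σ hΔ (Fin.last Δ)) (σ ⟨(r0 σ hΔ : ℕ), hlt⟩) := by
      rw [Fin.eta, σ_r0]
      exact chiR_conflicted_r0_last σ hΔ hL1
    refine advance_eq_of' _ σ le_rfl hlt ?_ hconf
    intro p hp h1 h2; omega

/-! ### Step computations -/

lemma update_chiL {inst : DecidableEq (Fin Δ ⊕ Fin Δ)} {m : Fin Δ} (pc c : Fin (Δ + 1)) :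
    @Function.update _ _ inst (chiL σ (m : ℕ) pc) (σ (q σ m)) c = chiL σ (m : ℕ) c := by
  obtain ⟨xm, hx1, hx2⟩ := exists_lx σ m
  rw [hx1]
  funext v
  rcases v with y | i
  · rw [Function.update_apply]
    split_ifs with h
    · have hy : y = xm := by simpa using h
      subst hy
      simp only [chiL, Sum.elim_inl]
      rw [if_neg (by rw [hx2]; omega), if_pos (by rw [hx2])]
    · have hy : y ≠ xm := fun hy => h (by rw [hy])
      have hidx : (idx σ y : ℕ) ≠ (m : ℕ) := by
        intro he
        exact hy (idx_injective σ (by rw [Fin.ext_iff, hx2]; exact he))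
      simp only [chiL, Sum.elim_inl]
      rw [if_neg hidx, if_neg hidx]
  · rw [Function.update_apply, if_neg (by simp)]
    rfl

lemma chiL_succ (m : ℕ) : chiL σ m (Fin.last Δ) = chiL σ (m + 1) 0 := by
  funext v
  rcases v with x | i
  · simp only [chiL, Sum.elim_inl]
    rcases Nat.lt_trichotomy (idx σ x : ℕ) m with h | h | h
    · rw [if_pos h, if_pos (by omega)]
    · rw [if_neg (by omega), if_pos h, if_pos (by omega)]
    · rw [if_neg (show ¬(idx σ x : ℕ) < m by omega),
        if_neg (show ¬(idx σ x : ℕ) = m by omega),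
        if_neg (show ¬(idx σ x : ℕ) < m + 1 by omega)]
      split_ifs <;> rfl
  · rfl

lemma chiL_L_eq_chiR0 : chiL σ (L σ hΔ) 0 = chiR σ hΔ 0 := by
  funext v
  rcases v with x | i
  · simp only [chiL, chiR, Sum.elim_inl]
    split_ifs <;> rfl
  · simp only [chiL, chiR, Sum.elim_inr]
    split_ifs with h
    · subst h; exact (Fin.ext (by simp) : Fin.castSucc ⟨0, hΔ⟩ = 0)
    · rfl

lemma chi0_eq_chiL (hL : 1 ≤ L σ hΔ) : chi0 Δ = chiL σ 0 0 := by
  funext v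
  rcases v with x | i
  · simp only [chi0, chiL, Sum.elim_inl]
    rw [if_neg (by omega)]
    split_ifs <;> rfl
  · rfl

lemma chi0_eq_chiR (hL : L σ hΔ = 0) : chi0 Δ = chiR σ hΔ 0 := by
  funext v
  rcases v with x | i
  · simp only [chi0, chiR, Sum.elim_inl]
    rw [if_neg (by omega)]
  · simp only [chi0, chiR, Sum.elim_inr]
    split_ifs with h
    · subst h; exact (Fin.ext (by simp) : Fin.castSucc ⟨0, hΔ⟩ = 0).symm
    · rfl

lemma pStep_stateL {m : Fin Δ} {pc : Fin (Δ + 1)}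
    {s : (Fin Δ ⊕ Fin Δ → Fin (Δ + 1)) × ℕ} (hm : (m : ℕ) < L σ hΔ)
    (h1 : s.1 = chiL σ (m : ℕ) pc) (hpc : pc ≠ Fin.last Δ)
    (hpos : (pc = 0 ∧ s.2 ≤ (q σ m : ℕ)) ∨ s.2 = (q σ m : ℕ)) (c : Fin (Δ + 1)) :
    pStep (BG Δ) (2 * Δ) σ s c = (chiL σ (m : ℕ) c, (q σ m : ℕ)) := by
  have hk : advance (BG Δ) (2 * Δ) σ s.1 s.2 = (q σ m : ℕ) := by
    rw [h1]; exact advance_chiL σ hΔ hm hpc hpos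
  unfold pStep
  simp only [hk]
  rw [dif_pos (q σ m).isLt]
  rw [Fin.eta, h1, update_chiL]


lemma update_chiR {inst : DecidableEq (Fin Δ ⊕ Fin Δ)} (c e : Fin (Δ + 1)) :
    @Function.update _ _ inst (chiR σ hΔ c) (.inr ⟨0, hΔ⟩) e = chiR σ hΔ e := by
  funext v
  rcases v with y | i
  · rw [Function.update_apply, if_neg (by simp)]
    rfl
  · rw [Function.update_apply]
    simp only [chiR, Sum.elim_inr, Sum.inr.injEq]
    split_ifs <;> rfl

lemma pStep_stateR {c : Fin (Δ + 1)} {s : (Fin Δ ⊕ Fin Δ → Fin (Δ + 1)) × ℕ}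
    (hL : L σ hΔ < Δ) (h1 : s.1 = chiR σ hΔ c)
    (hcond : (c = 0 ∧ s.2 ≤ (r0 σ hΔ : ℕ)) ∨
      (c = Fin.last Δ ∧ 1 ≤ L σ hΔ ∧ s.2 = (r0 σ hΔ : ℕ))) (e : Fin (Δ + 1)) :
    pStep (BG Δ) (2 * Δ) σ s e = (chiR σ hΔ e, (r0 σ hΔ : ℕ)) := by
  have hk : advance (BG Δ) (2 * Δ) σ s.1 s.2 = (r0 σ hΔ : ℕ) := by
    rw [h1]; exact advance_chiR σ hΔ hL hcond
  unfold pStep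
  simp only [hk]
  rw [dif_pos (r0 σ hΔ).isLt]
  rw [Fin.eta, σ_r0, h1, update_chiR]

/-! ### The invariant -/

def Term (s : (Fin Δ ⊕ Fin Δ → Fin (Δ + 1)) × ℕ) : Prop :=
  advance (BG Δ) (2 * Δ) σ s.1 s.2 = 2 * Δ

noncomputable def run (l : List (Fin (Δ + 1))) : (Fin Δ ⊕ Fin Δ → Fin (Δ + 1)) × ℕ :=
  pRun (BG Δ) (2 * Δ) σ (chi0 Δ) l

def GoodL (m : Fin Δ) (s : (Fin Δ ⊕ Fin Δ → Fin (Δ + 1)) × ℕ) : Prop :=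
  ∃ pc, pc ≠ Fin.last Δ ∧ s.1 = chiL σ (m : ℕ) pc ∧
    ((pc = 0 ∧ s.2 ≤ (q σ m : ℕ)) ∨ s.2 = (q σ m : ℕ))

def GoodR (s : (Fin Δ ⊕ Fin Δ → Fin (Δ + 1)) × ℕ) : Prop :=
  L σ hΔ < Δ ∧ ∃ c, s.1 = chiR σ hΔ c ∧
    ((c = 0 ∧ s.2 ≤ (r0 σ hΔ : ℕ)) ∨
      (c = Fin.last Δ ∧ 1 ≤ L σ hΔ ∧ s.2 = (r0 σ hΔ : ℕ)))

def Good (l : List (Fin (Δ + 1))) : Prop :=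
  if h : l.count (Fin.last Δ) < L σ hΔ then
    GoodL σ ⟨l.count (Fin.last Δ), lt_of_lt_of_le h (L_le σ hΔ)⟩ (run σ l)
  else
    Term σ (run σ l) ∨ GoodR σ hΔ (run σ l)

lemma count_concat (l : List (Fin (Δ + 1))) (c : Fin (Δ + 1)) :
    (l ++ [c]).count (Fin.last Δ) =
      l.count (Fin.last Δ) + (if c = Fin.last Δ then 1 else 0) := by
  simp [List.count_append, List.count_singleton']

lemma good_nil : Good σ hΔ [] := by
  rw [Good]
  by_cases h : 0 < L σ hΔ
  · rw [dif_pos (by simpa using h)]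
    refine ⟨0, zero_ne_last hΔ, ?_, Or.inl ⟨rfl, Nat.zero_le _⟩⟩
    show chi0 Δ = _
    simpa using chi0_eq_chiL σ hΔ h
  · rw [dif_neg (by simpa using h)]
    right
    refine ⟨by omega, 0, ?_, Or.inl ⟨rfl, Nat.zero_le _⟩⟩
    show chi0 Δ = _
    exact chi0_eq_chiR σ hΔ (by omega)

lemma good_step (l : List (Fin (Δ + 1))) (c : Fin (Δ + 1)) (h : Good σ hΔ l) :
    Good σ hΔ (l ++ [c]) := by
  have hrun : run σ (l ++ [c]) = pStep (BG Δ) (2 * Δ) σ (run σ l) c :=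
    pRun_concat _ σ _ l c
  have hcnt := count_concat l c
  by_cases h0 : l.count (Fin.last Δ) < L σ hΔ
  · rw [Good, dif_pos h0] at h
    obtain ⟨pc, hpc, h1, hpos⟩ := h
    set m0 := l.count (Fin.last Δ) with hm0
    have hm : ((⟨m0, lt_of_lt_of_le h0 (L_le σ hΔ)⟩ : Fin Δ) : ℕ) < L σ hΔ := h0
    have hstep := pStep_stateL σ hΔ hm h1 hpc hpos c
    by_cases hc : c = Fin.last Δ
    · subst hc
      have hcnt' : (l ++ [Fin.last Δ]).count (Fin.last Δ) = m0 + 1 := by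
        rw [hcnt, if_pos rfl]
      rw [Good]
      simp only [hcnt']
      by_cases hb1 : m0 + 1 < L σ hΔ
      · rw [dif_pos hb1]
        refine ⟨0, zero_ne_last hΔ, ?_, ?_⟩
        · rw [hrun, hstep]
          exact chiL_succ σ m0
        · left
          refine ⟨rfl, ?_⟩
          rw [hrun, hstep]
          exact le_of_lt (Fin.lt_def.1 ((q_lt_q σ).2 (Fin.mk_lt_mk.2 (Nat.lt_succ_self _))))
      · rw [dif_neg hb1]
        have hLm : L σ hΔ = m0 + 1 := by omega
        by_cases hb2 : L σ hΔ < Δ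
        · right
          refine ⟨hb2, 0, ?_, Or.inl ⟨rfl, ?_⟩⟩
          · rw [hrun, hstep, chiL_succ σ m0, ← hLm]
            exact chiL_L_eq_chiR0 σ hΔ
          · rw [hrun, hstep]
            exact le_of_lt ((q_lt_r0_iff σ hΔ _).2 hm)
        · left
          have hLΔ : L σ hΔ = Δ := by
            have := L_le σ hΔ; omega
          rw [Term, hrun, hstep]
          have heq : chiL σ (m0 : ℕ) (Fin.last Δ) = chiL σ Δ 0 := by
            rw [chiL_succ σ m0]
            have hmΔ : m0 + 1 = Δ := by omega
            rw [hmΔ]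
          rw [heq]
          exact advance_eq_n' _ σ _ (le_of_lt (q σ _).isLt)
            (chiL_all_unconflicted σ 0)
    · have hcnt' : (l ++ [c]).count (Fin.last Δ) = m0 := by
        rw [hcnt, if_neg hc]; omega
      rw [Good]
      simp only [hcnt']
      rw [dif_pos h0]
      exact ⟨c, hc, by rw [hrun, hstep],
        Or.inr (by rw [hrun, hstep])⟩
  · have h0' : ¬ ((l ++ [c]).count (Fin.last Δ) < L σ hΔ) := by
      rw [hcnt]; split_ifs <;> omega
    rw [Good, dif_neg h0] at h
    rw [Good, dif_neg h0']
    rcases h with hterm | ⟨hL, cv, h1, hcond⟩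
    · left
      rw [Term, hrun, pStep_of_term _ σ _ hterm]
      exact hterm
    · have hstep := pStep_stateR σ hΔ hL h1 hcond c
      by_cases hc0 : c = 0
      · right
        subst hc0
        refine ⟨hL, 0, by rw [hrun, hstep], Or.inl ⟨rfl, ?_⟩⟩
        rw [hrun, hstep]
      · by_cases hcl : c = Fin.last Δ
        · subst hcl
          by_cases hL1 : 1 ≤ L σ hΔ
          · right
            refine ⟨hL, Fin.last Δ, by rw [hrun, hstep],
              Or.inr ⟨rfl, hL1, ?_⟩⟩
            rw [hrun, hstep]
          · left
            rw [Term, hrun, hstep]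
            exact advance_eq_n' _ σ _ (le_of_lt (r0 σ hΔ).isLt)
              (chiR_all_unconflicted σ hΔ (Ne.symm (zero_ne_last hΔ))
                (fun _ => by omega))
        · left
          rw [Term, hrun, hstep]
          exact advance_eq_n' _ σ _ (le_of_lt (r0 σ hΔ).isLt)
            (chiR_all_unconflicted σ hΔ hc0 (fun hh => absurd hh hcl))

lemma good (l : List (Fin (Δ + 1))) : Good σ hΔ l := by
  induction l using List.reverseRecOn with
  | nil => exact good_nil σ hΔ
  | append_singleton l c ih => exact good_step σ hΔ l c ih

/-! ### Consequences -/

lemma pPos_ne_of_count_lt {l : List (Fin (Δ + 1))}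
    (h : l.count (Fin.last Δ) < L σ hΔ) :
    pPos (BG Δ) (2 * Δ) σ (chi0 Δ) l ≠ 2 * Δ := by
  have hg := good σ hΔ l
  rw [Good, dif_pos h] at hg
  obtain ⟨pc, hpc, h1, hpos⟩ := hg
  set mfin : Fin Δ := ⟨l.count (Fin.last Δ), lt_of_lt_of_le h (L_le σ hΔ)⟩ with hmfin
  have hm : ((mfin : Fin Δ) : ℕ) < L σ hΔ := h
  have heq : pPos (BG Δ) (2 * Δ) σ (chi0 Δ) l = (q σ mfin : ℕ) := by
    unfold pPos
    rw [show pRun (BG Δ) (2 * Δ) σ (chi0 Δ) l = run σ l from rfl, h1]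
    exact advance_chiL σ hΔ hm hpc hpos
  rw [heq]
  exact Nat.ne_of_lt (q σ mfin).isLt

lemma killer (l : List (Fin (Δ + 1))) :
    pPos (BG Δ) (2 * Δ) σ (chi0 Δ)
      (l ++ (List.replicate (Δ + 1) (Fin.last Δ) ++ [⟨1, by omega⟩])) = 2 * Δ := by
  set e1 : Fin (Δ + 1) := ⟨1, by omega⟩ with he1
  set l1 := l ++ List.replicate (Δ + 1) (Fin.last Δ) with hl1
  have hassoc : l ++ (List.replicate (Δ + 1) (Fin.last Δ) ++ [e1]) = l1 ++ [e1] :=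
    (List.append_assoc _ _ _).symm
  have hcnt : ¬ (l1.count (Fin.last Δ) < L σ hΔ) := by
    have h1 : l1.count (Fin.last Δ) = l.count (Fin.last Δ) + (Δ + 1) := by
      rw [hl1, List.count_append, List.count_replicate_self]
    have := L_le σ hΔ
    omega
  have hg := good σ hΔ l1
  rw [Good, dif_neg hcnt] at hg
  rw [hassoc]
  rcases hg with hterm | ⟨hL, cv, h1, hcond⟩
  · exact pPos_append_of_term _ σ _ hterm [e1]
  · have hstep := pStep_stateR σ hΔ hL h1 hcond e1
    have hrun : pRun (BG Δ) (2 * Δ) σ (chi0 Δ) (l1 ++ [e1]) =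
        (chiR σ hΔ e1, (r0 σ hΔ : ℕ)) := by
      rw [pRun_concat]; exact hstep
    unfold pPos
    rw [hrun]
    refine advance_eq_n' _ σ _ (le_of_lt (r0 σ hΔ).isLt)
      (chiR_all_unconflicted σ hΔ ?_ ?_)
    · exact Fin.ne_of_val_ne (by norm_num)
    · intro hh
      have := congrArg Fin.val hh
      simp [he1] at this
      omega

/-! ### Counting -/

noncomputable def NT (t : ℕ) : ℕ :=
  Nat.card {f : Fin t → Fin (Δ + 1) //
    pPos (BG Δ) (2 * Δ) σ (chi0 Δ) (List.ofFn f) ≠ 2 * Δ}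

lemma NT_eq (t : ℕ) :
    NT σ t = Fintype.card {f : Fin t → Fin (Δ + 1) //
      pPos (BG Δ) (2 * Δ) σ (chi0 Δ) (List.ofFn f) ≠ 2 * Δ} := by
  classical
  exact Nat.card_eq_fintype_card

lemma NT_zero : NT σ 0 ≤ 1 := by
  classical
  have h := Nat.card_le_card_of_injective
    (Subtype.val : {f : Fin 0 → Fin (Δ + 1) //
      pPos (BG Δ) (2 * Δ) σ (chi0 Δ) (List.ofFn f) ≠ 2 * Δ} → (Fin 0 → Fin (Δ + 1)))
    Subtype.val_injective
  have h2 : Nat.card (Fin 0 → Fin (Δ + 1)) = 1 := by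
    rw [Nat.card_eq_fintype_card]
    simp
  rw [NT]
  exact le_trans h (le_of_eq h2)

lemma NT_succ (t : ℕ) : NT σ (t + 1) ≤ (Δ + 1) * NT σ t := by
  classical
  have hsplit : ∀ f : Fin (t + 1) → Fin (Δ + 1),
      List.ofFn f = List.ofFn (fun i => f i.castSucc) ++ [f (Fin.last t)] := by
    intro f
    rw [List.ofFn_succ' f, List.concat_eq_append]
  have hinj : Function.Injective
      (fun f : {f : Fin (t + 1) → Fin (Δ + 1) //
          pPos (BG Δ) (2 * Δ) σ (chi0 Δ) (List.ofFn f) ≠ 2 * Δ} =>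
        ((⟨fun i => f.1 i.castSucc, by
            intro hterm
            apply f.2
            rw [hsplit f.1]
            exact pPos_append_of_term _ σ _ hterm [f.1 (Fin.last t)]⟩ :
          {f : Fin t → Fin (Δ + 1) //
            pPos (BG Δ) (2 * Δ) σ (chi0 Δ) (List.ofFn f) ≠ 2 * Δ}),
          f.1 (Fin.last t))) := by
    intro f g hfg
    apply Subtype.ext
    funext i
    induction i using Fin.lastCases with
    | last => exact congrArg Prod.snd hfg
    | cast j => exact congrFun (congrArg Subtype.val (congrArg Prod.fst hfg)) j
  have h := Nat.card_le_card_of_injective _ hinj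
  rw [Nat.card_prod] at h
  calc NT σ (t + 1) ≤ NT σ t * Nat.card (Fin (Δ + 1)) := h
    _ = (Δ + 1) * NT σ t := by rw [Nat.card_eq_fintype_card, Fintype.card_fin]; ring

noncomputable def bfun : Fin (Δ + 2) → Fin (Δ + 1) :=
  fun i => if (i : ℕ) < Δ + 1 then Fin.last Δ else ⟨1, by omega⟩

lemma ofFn_bfun :
    List.ofFn (bfun (Δ := Δ) hΔ) =
      List.replicate (Δ + 1) (Fin.last Δ) ++ [⟨1, by omega⟩] := by
  apply List.ext_getElem
  · simp
  · intro i h1 h2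
    rw [List.getElem_ofFn]
    simp only [List.length_ofFn] at h1
    rw [List.getElem_append]
    split_ifs with h
    · rw [List.getElem_replicate]
      rw [bfun, if_pos (by simpa using h)]
    · simp only [List.length_replicate, not_lt] at h
      rw [List.getElem_singleton]
      rw [bfun, if_neg (by simp only [Fin.val_mk]; omega)]

include hΔ in
lemma NT_block (t : ℕ) :
    NT σ (t + (Δ + 2)) ≤ NT σ t * ((Δ + 1) ^ (Δ + 2) - 1) := by
  classical
  have hinj : Function.Injective
      (fun f : {f : Fin (t + (Δ + 2)) → Fin (Δ + 1) //
          pPos (BG Δ) (2 * Δ) σ (chi0 Δ) (List.ofFn f) ≠ 2 * Δ} =>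
        ((⟨fun i => f.1 (Fin.castAdd _ i), by
            intro hterm
            apply f.2
            rw [List.ofFn_add (f := f.1)]
            exact pPos_append_of_term _ σ _ hterm _⟩ :
          {f : Fin t → Fin (Δ + 1) //
            pPos (BG Δ) (2 * Δ) σ (chi0 Δ) (List.ofFn f) ≠ 2 * Δ}),
         (⟨fun j => f.1 (Fin.natAdd t j), by
            intro hb
            apply f.2
            rw [List.ofFn_add (f := f.1), hb, ofFn_bfun hΔ]
            exact killer σ hΔ _⟩ :
          {b : Fin (Δ + 2) → Fin (Δ + 1) // b ≠ bfun hΔ}))) := by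
    intro f g hfg
    apply Subtype.ext
    funext i
    induction i using Fin.addCases with
    | left j => exact congrFun (congrArg Subtype.val (congrArg Prod.fst hfg)) j
    | right j => exact congrFun (congrArg Subtype.val (congrArg Prod.snd hfg)) j
  have h := Nat.card_le_card_of_injective _ hinj
  rw [Nat.card_prod] at h
  have hC : Nat.card {b : Fin (Δ + 2) → Fin (Δ + 1) // b ≠ bfun hΔ} =
      (Δ + 1) ^ (Δ + 2) - 1 := by
    rw [Nat.card_eq_fintype_card]
    have h1 : Fintype.card {b : Fin (Δ + 2) → Fin (Δ + 1) // ¬ b = bfun hΔ} =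
        Fintype.card (Fin (Δ + 2) → Fin (Δ + 1)) -
        Fintype.card {b : Fin (Δ + 2) → Fin (Δ + 1) // b = bfun hΔ} :=
      Fintype.card_subtype_compl _
    rw [h1, Fintype.card_subtype_eq, Fintype.card_fun]
    simp
  rw [hC] at h
  exact h

include hΔ in
lemma NT_le (t : ℕ) :
    NT σ t ≤ (Δ + 1) ^ (t % (Δ + 2)) * ((Δ + 1) ^ (Δ + 2) - 1) ^ (t / (Δ + 2)) := by
  have hmul : ∀ k, NT σ ((Δ + 2) * k) ≤ ((Δ + 1) ^ (Δ + 2) - 1) ^ k := by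
    intro k
    induction k with
    | zero => simpa using NT_zero σ
    | succ k ih =>
      have he : (Δ + 2) * (k + 1) = (Δ + 2) * k + (Δ + 2) := by ring
      rw [he, pow_succ]
      exact le_trans (NT_block σ hΔ _) (Nat.mul_le_mul_right _ ih)
  have hadd : ∀ j k, NT σ ((Δ + 2) * k + j) ≤
      (Δ + 1) ^ j * ((Δ + 1) ^ (Δ + 2) - 1) ^ k := by
    intro j
    induction j with
    | zero => intro k; simpa using hmul k
    | succ j ih =>
      intro k
      have he : (Δ + 2) * k + (j + 1) = ((Δ + 2) * k + j) + 1 := by ring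
      rw [he, pow_succ]
      calc NT σ (((Δ + 2) * k + j) + 1) ≤ (Δ + 1) * NT σ ((Δ + 2) * k + j) :=
            NT_succ σ _
        _ ≤ (Δ + 1) * ((Δ + 1) ^ j * ((Δ + 1) ^ (Δ + 2) - 1) ^ k) :=
            Nat.mul_le_mul_left _ (ih k)
        _ = (Δ + 1) ^ j * (Δ + 1) * ((Δ + 1) ^ (Δ + 2) - 1) ^ k := by ring
  have h := hadd (t % (Δ + 2)) (t / (Δ + 2))
  rwa [Nat.div_add_mod] at h

/-! ### Markov lower bound on `NT` -/

noncomputable def cnt {t : ℕ} (f : Fin t → Fin (Δ + 1)) : ℕ :=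
  (Finset.univ.filter fun i => f i = Fin.last Δ).card

lemma count_ofFn {t : ℕ} (f : Fin t → Fin (Δ + 1)) :
    (List.ofFn f).count (Fin.last Δ) = cnt f := by
  classical
  induction t with
  | zero => simp [cnt]
  | succ t ih =>
    rw [List.ofFn_succ' f, List.concat_eq_append, List.count_append, ih]
    rw [cnt, cnt, Finset.card_filter, Finset.card_filter, Fin.sum_univ_castSucc]
    simp [List.count_singleton', eq_comm]

lemma sum_cnt (t : ℕ) :
    ∑ f : Fin t → Fin (Δ + 1), cnt f ≤ t * (Δ + 1) ^ (t - 1) := by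
  classical
  have hswap : ∑ f : Fin t → Fin (Δ + 1), cnt f =
      ∑ i : Fin t, (Finset.univ.filter
        fun f : Fin t → Fin (Δ + 1) => f i = Fin.last Δ).card := by
    simp_rw [cnt, Finset.card_filter]
    rw [Finset.sum_comm]
  rw [hswap]
  have hbound : ∀ i : Fin t, (Finset.univ.filter
      fun f : Fin t → Fin (Δ + 1) => f i = Fin.last Δ).card ≤ (Δ + 1) ^ (t - 1) := by
    intro i
    rw [← Fintype.card_subtype]
    have hinj : Function.Injective
        (fun (f : {f : Fin t → Fin (Δ + 1) // f i = Fin.last Δ})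
          (j : {j : Fin t // j ≠ i}) => f.1 j.1) := by
      intro f g hfg
      apply Subtype.ext
      funext j
      by_cases hj : j = i
      · rw [hj, f.2, g.2]
      · exact congrFun hfg ⟨j, hj⟩
    have h := Fintype.card_le_of_injective _ hinj
    rw [Fintype.card_fun, Fintype.card_fin] at h
    have hcard : Fintype.card {j : Fin t // j ≠ i} = t - 1 := by
      rw [Fintype.card_subtype_compl, Fintype.card_subtype_eq, Fintype.card_fin]
    rwa [hcard] at h
  calc ∑ i : Fin t, (Finset.univ.filter
        fun f : Fin t → Fin (Δ + 1) => f i = Fin.last Δ).card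
      ≤ ∑ _i : Fin t, (Δ + 1) ^ (t - 1) := Finset.sum_le_sum (fun i _ => hbound i)
    _ = t * (Δ + 1) ^ (t - 1) := by simp [Finset.sum_const, mul_comm]

lemma NT_ge (t : ℕ) :
    (Δ + 1) ^ t ≤ NT σ t +
      (Finset.univ.filter
        fun f : Fin t → Fin (Δ + 1) => L σ hΔ ≤ cnt f).card := by
  classical
  have hsum := Finset.card_filter_add_card_filter_not
    (s := (Finset.univ : Finset (Fin t → Fin (Δ + 1))))
    (p := fun f => L σ hΔ ≤ cnt f)
  rw [Finset.card_univ, Fintype.card_fun] at hsum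
  simp only [Fintype.card_fin] at hsum
  have hGoodNT : (Finset.univ.filter
      fun f : Fin t → Fin (Δ + 1) => ¬ (L σ hΔ ≤ cnt f)).card ≤ NT σ t := by
    rw [NT_eq]
    rw [← Fintype.card_subtype]
    apply Fintype.card_le_of_injective
      (fun f : {f : Fin t → Fin (Δ + 1) // ¬ (L σ hΔ ≤ cnt f)} =>
        (⟨f.1, by
          apply pPos_ne_of_count_lt σ hΔ
          rw [count_ofFn]
          omega⟩ :
          {f : Fin t → Fin (Δ + 1) //
            pPos (BG Δ) (2 * Δ) σ (chi0 Δ) (List.ofFn f) ≠ 2 * Δ}))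
    intro a b hab
    apply Subtype.ext
    simpa using hab
  omega

lemma bad_le (t : ℕ) :
    L σ hΔ * (Finset.univ.filter
      fun f : Fin t → Fin (Δ + 1) => L σ hΔ ≤ cnt f).card ≤
      t * (Δ + 1) ^ (t - 1) := by
  classical
  have h1 : (Finset.univ.filter
      fun f : Fin t → Fin (Δ + 1) => L σ hΔ ≤ cnt f).card * L σ hΔ ≤
      ∑ f ∈ (Finset.univ.filter
        fun f : Fin t → Fin (Δ + 1) => L σ hΔ ≤ cnt f), cnt f := by
    apply Finset.card_nsmul_le_sum
    intro f hf
    simp only [Finset.mem_filter] at hf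
    exact hf.2
  have h2 : ∑ f ∈ (Finset.univ.filter
      fun f : Fin t → Fin (Δ + 1) => L σ hΔ ≤ cnt f), cnt f ≤
      ∑ f : Fin t → Fin (Δ + 1), cnt f :=
    Finset.sum_le_sum_of_subset (Finset.filter_subset _ _)
  calc L σ hΔ * (Finset.univ.filter
      fun f : Fin t → Fin (Δ + 1) => L σ hΔ ≤ cnt f).card
      = (Finset.univ.filter
        fun f : Fin t → Fin (Δ + 1) => L σ hΔ ≤ cnt f).card * L σ hΔ := by ring
    _ ≤ _ := le_trans h1 (le_trans h2 (sum_cnt t))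

/-! ### Real-valued bounds -/

noncomputable def u (t : ℕ) : ℝ := (NT σ t : ℝ) / ((Δ : ℝ) + 1) ^ t

lemma u_nonneg (t : ℕ) : 0 ≤ u σ t := by
  apply div_nonneg (Nat.cast_nonneg _)
  positivity

lemma expectedTotal_eq :
    expectedTotal (BG Δ) (2 * Δ) σ (chi0 Δ) = ∑' t, u σ t := by
  apply tsum_congr
  intro t
  rw [u, NT]
  norm_cast

variable (Δ) in
noncomputable def theta : ℝ :=
  (((Δ + 1) ^ (Δ + 2) - 1 : ℕ) : ℝ) / ((Δ : ℝ) + 1) ^ (Δ + 2)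

lemma theta_nonneg : 0 ≤ theta Δ := by
  apply div_nonneg (Nat.cast_nonneg _)
  positivity

lemma theta_lt_one : theta Δ < 1 := by
  rw [theta, div_lt_one (by positivity)]
  have h1 : (((Δ + 1) ^ (Δ + 2) - 1 : ℕ) : ℝ) < (((Δ + 1) ^ (Δ + 2) : ℕ) : ℝ) := by
    have hp : 0 < (Δ + 1) ^ (Δ + 2) := Nat.pow_pos (by omega)
    exact_mod_cast Nat.sub_lt hp one_pos
  calc (((Δ + 1) ^ (Δ + 2) - 1 : ℕ) : ℝ) < (((Δ + 1) ^ (Δ + 2) : ℕ) : ℝ) := h1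
    _ = ((Δ : ℝ) + 1) ^ (Δ + 2) := by push_cast; ring

include hΔ in
lemma u_le (t : ℕ) : u σ t ≤ theta Δ ^ (t / (Δ + 2)) := by
  set k := t / (Δ + 2) with hk
  set r := t % (Δ + 2) with hr
  have ht : (Δ + 2) * k + r = t := Nat.div_add_mod t (Δ + 2)
  have h1 : (NT σ t : ℝ) ≤
      ((Δ : ℝ) + 1) ^ r * (((Δ + 1) ^ (Δ + 2) - 1 : ℕ) : ℝ) ^ k := by
    have h := NT_le σ hΔ t
    calc (NT σ t : ℝ)
        ≤ (((Δ + 1) ^ r * ((Δ + 1) ^ (Δ + 2) - 1) ^ k : ℕ) : ℝ) := Nat.cast_le.2 h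
      _ = _ := by
        rw [Nat.cast_mul, Nat.cast_pow, Nat.cast_pow]
        push_cast [Nat.cast_add]
        ring_nf
  have hden : ((Δ : ℝ) + 1) ^ t =
      ((Δ : ℝ) + 1) ^ r * (((Δ : ℝ) + 1) ^ (Δ + 2)) ^ k := by
    rw [← ht, pow_add, pow_mul]
    ring
  have hpos : (0 : ℝ) < ((Δ : ℝ) + 1) ^ t := by positivity
  rw [u, div_le_iff₀ hpos]
  rw [theta, div_pow, hden]
  rw [div_mul_eq_mul_div]
  rw [le_div_iff₀ (by positivity)]
  calc (NT σ t : ℝ) * (((Δ : ℝ) + 1) ^ (Δ + 2)) ^ k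
      ≤ (((Δ : ℝ) + 1) ^ r * (((Δ + 1) ^ (Δ + 2) - 1 : ℕ) : ℝ) ^ k) *
        (((Δ : ℝ) + 1) ^ (Δ + 2)) ^ k := by
        apply mul_le_mul_of_nonneg_right h1 (by positivity)
    _ = (((Δ + 1) ^ (Δ + 2) - 1 : ℕ) : ℝ) ^ k *
        (((Δ : ℝ) + 1) ^ r * (((Δ : ℝ) + 1) ^ (Δ + 2)) ^ k) := by ring

include hΔ in
lemma partial_sum_u_le (T : ℕ) :
    ∑ t ∈ Finset.range T, u σ t ≤ ((Δ : ℝ) + 2) * (1 - theta Δ)⁻¹ := by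
  have h0 : ∀ t, (0 : ℝ) ≤ theta Δ ^ (t / (Δ + 2)) :=
    fun t => pow_nonneg theta_nonneg _
  have h1 : ∑ t ∈ Finset.range T, u σ t ≤
      ∑ t ∈ Finset.range T, theta Δ ^ (t / (Δ + 2)) :=
    Finset.sum_le_sum fun t _ => u_le σ hΔ t
  have h2 : ∑ t ∈ Finset.range T, theta Δ ^ (t / (Δ + 2)) ≤
      ∑ t ∈ Finset.range ((Δ + 2) * T), theta Δ ^ (t / (Δ + 2)) := by
    apply Finset.sum_le_sum_of_subset_of_nonneg
    · apply Finset.range_subset_range.2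
      nlinarith [Nat.zero_le T]
    · intro t _ _
      exact h0 t
  have h3 : ∀ T' : ℕ, ∑ t ∈ Finset.range ((Δ + 2) * T'), theta Δ ^ (t / (Δ + 2)) =
      ∑ k ∈ Finset.range T', ((Δ : ℝ) + 2) * theta Δ ^ k := by
    intro T'
    induction T' with
    | zero => simp
    | succ T' ih =>
      have he : (Δ + 2) * (T' + 1) = (Δ + 2) * T' + (Δ + 2) := by ring
      have hconst : ∀ i ∈ Finset.range (Δ + 2),
          theta Δ ^ (((Δ + 2) * T' + i) / (Δ + 2)) = theta Δ ^ T' := by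
        intro i hi
        rw [Finset.mem_range] at hi
        congr 1
        rw [Nat.mul_add_div (by omega), Nat.div_eq_of_lt hi, Nat.add_zero]
      rw [he, Finset.sum_range_add, ih, Finset.sum_congr rfl hconst,
        Finset.sum_const, Finset.card_range, Finset.sum_range_succ]
      push_cast [nsmul_eq_mul]
      ring
  have h4 : ∑ k ∈ Finset.range T, ((Δ : ℝ) + 2) * theta Δ ^ k ≤
      ((Δ : ℝ) + 2) * (1 - theta Δ)⁻¹ := by
    rw [← Finset.mul_sum]
    apply mul_le_mul_of_nonneg_left _ (by positivity)
    have hsum : ∑ k ∈ Finset.range T, theta Δ ^ k ≤ ∑' k : ℕ, theta Δ ^ k := by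
      apply Summable.sum_le_tsum
      · intro k _
        exact pow_nonneg theta_nonneg _
      · exact summable_geometric_of_lt_one theta_nonneg theta_lt_one
    rwa [tsum_geometric_of_lt_one theta_nonneg theta_lt_one] at hsum
  calc ∑ t ∈ Finset.range T, u σ t
      ≤ ∑ t ∈ Finset.range ((Δ + 2) * T), theta Δ ^ (t / (Δ + 2)) :=
        le_trans h1 h2
    _ = ∑ k ∈ Finset.range T, ((Δ : ℝ) + 2) * theta Δ ^ k := h3 T
    _ ≤ _ := h4

include hΔ in
lemma summable_u : Summable (u σ) := by
  apply summable_of_sum_range_le (fun t => u_nonneg σ t)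
  intro T
  exact partial_sum_u_le σ hΔ T

include hΔ in
lemma NT_zero_pos (hL1 : 1 ≤ L σ hΔ) : 1 ≤ NT σ 0 := by
  have hne : Nonempty {f : Fin 0 → Fin (Δ + 1) //
      pPos (BG Δ) (2 * Δ) σ (chi0 Δ) (List.ofFn f) ≠ 2 * Δ} := by
    refine ⟨⟨fun i => i.elim0, ?_⟩⟩
    apply pPos_ne_of_count_lt σ hΔ
    rw [List.ofFn_zero, List.count_nil]
    omega
  rw [NT]
  exact Nat.one_le_iff_ne_zero.2 (Nat.card_ne_zero.2 ⟨hne, inferInstance⟩)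

include hΔ in
lemma u_ge (hL1 : 1 ≤ L σ hΔ) (t : ℕ) :
    1 - (t : ℝ) / ((L σ hΔ : ℝ) * ((Δ : ℝ) + 1)) ≤ u σ t := by
  have hLr : (1 : ℝ) ≤ (L σ hΔ : ℝ) := by exact_mod_cast hL1
  rcases Nat.eq_zero_or_pos t with rfl | ht
  · have h := NT_zero_pos σ hΔ hL1
    have h' : (1 : ℝ) ≤ (NT σ 0 : ℝ) := by exact_mod_cast h
    simp only [u, pow_zero, div_one, Nat.cast_zero, zero_div, sub_zero]
    exact h'
  · set b := (Finset.univ.filter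
      fun f : Fin t → Fin (Δ + 1) => L σ hΔ ≤ cnt f).card with hbdef
    have h1 : ((Δ : ℝ) + 1) ^ t ≤ (NT σ t : ℝ) + (b : ℝ) := by
      have h := NT_ge σ hΔ t
      have hc : (((Δ + 1) ^ t : ℕ) : ℝ) ≤ ((NT σ t + b : ℕ) : ℝ) := Nat.cast_le.2 h
      push_cast at hc
      linarith
    have h2 : (L σ hΔ : ℝ) * (b : ℝ) ≤ (t : ℝ) * ((Δ : ℝ) + 1) ^ (t - 1) := by
      have h := bad_le σ hΔ t
      have hc : ((L σ hΔ * b : ℕ) : ℝ) ≤ ((t * (Δ + 1) ^ (t - 1) : ℕ) : ℝ) :=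
        Nat.cast_le.2 h
      push_cast at hc
      linarith
    have hLpos : (0 : ℝ) < (L σ hΔ : ℝ) := by linarith
    have hsplit : ((Δ : ℝ) + 1) ^ t = ((Δ : ℝ) + 1) ^ (t - 1) * ((Δ : ℝ) + 1) := by
      rw [← pow_succ]
      congr 1
      omega
    have hpos : (0 : ℝ) < ((Δ : ℝ) + 1) ^ t := by positivity
    rw [u, le_div_iff₀ hpos]
    have hb : (b : ℝ) ≤ (t : ℝ) * ((Δ : ℝ) + 1) ^ (t - 1) / (L σ hΔ : ℝ) := by
      rw [le_div_iff₀ hLpos]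
      linarith
    have key : (1 - (t : ℝ) / ((L σ hΔ : ℝ) * ((Δ : ℝ) + 1))) * ((Δ : ℝ) + 1) ^ t =
        ((Δ : ℝ) + 1) ^ t - (t : ℝ) * ((Δ : ℝ) + 1) ^ (t - 1) / (L σ hΔ : ℝ) := by
      rw [hsplit]
      field_simp
    rw [key]
    linarith

include hΔ in
lemma expectedTotal_ge_L :
    (L σ hΔ : ℝ) * ((Δ : ℝ) + 1) / 2 ≤ expectedTotal (BG Δ) (2 * Δ) σ (chi0 Δ) := by
  rw [expectedTotal_eq σ]
  rcases Nat.eq_zero_or_pos (L σ hΔ) with hL0 | hL1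
  · rw [hL0]
    simp only [Nat.cast_zero, zero_mul, zero_div]
    exact tsum_nonneg (u_nonneg σ)
  · set K := L σ hΔ * (Δ + 1) with hK
    have hK1 : 1 ≤ K := Nat.mul_pos hL1 (by omega)
    have hKr : (K : ℝ) = (L σ hΔ : ℝ) * ((Δ : ℝ) + 1) := by
      rw [hK]; push_cast; ring
    have hKrpos : (0 : ℝ) < (K : ℝ) := by
      rw [hKr]; positivity
    have hpart : ∑ t ∈ Finset.range K, u σ t ≤ ∑' t, u σ t :=
      Summable.sum_le_tsum _ (fun t _ => u_nonneg σ t) (summable_u σ hΔ)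
    have h5 : ∑ t ∈ Finset.range K, (1 - (t : ℝ) / (K : ℝ)) ≤
        ∑ t ∈ Finset.range K, u σ t := by
      apply Finset.sum_le_sum
      intro t _
      rw [hKr]
      exact u_ge σ hΔ hL1 t
    have hgauss : ∑ t ∈ Finset.range K, (t : ℝ) = (K : ℝ) * ((K : ℝ) - 1) / 2 := by
      have hg := Finset.sum_range_id_mul_two K
      have hgc : ((∑ i ∈ Finset.range K, i) * 2 : ℕ) = (K * (K - 1) : ℕ) := hg
      have hc := congrArg (fun x : ℕ => (x : ℝ)) hgc
      push_cast [Nat.cast_sub (by omega : 1 ≤ K)] at hc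
      linarith
    have hcomp : ∑ t ∈ Finset.range K, (1 - (t : ℝ) / (K : ℝ)) =
        (K : ℝ) - ((K : ℝ) * ((K : ℝ) - 1) / 2) / (K : ℝ) := by
      rw [Finset.sum_sub_distrib, Finset.sum_const, Finset.card_range, ← Finset.sum_div,
        hgauss]
      simp [nsmul_eq_mul]
    have hhalf : (K : ℝ) / 2 ≤ ∑ t ∈ Finset.range K, (1 - (t : ℝ) / (K : ℝ)) := by
      rw [hcomp]
      have hc1 : (1 : ℝ) ≤ (K : ℝ) := by exact_mod_cast hK1
      have he : ((K : ℝ) * ((K : ℝ) - 1) / 2) / (K : ℝ) = ((K : ℝ) - 1) / 2 := by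
        field_simp
      rw [he]
      linarith
    calc (L σ hΔ : ℝ) * ((Δ : ℝ) + 1) / 2 = (K : ℝ) / 2 := by rw [hKr]
      _ ≤ ∑ t ∈ Finset.range K, (1 - (t : ℝ) / (K : ℝ)) := hhalf
      _ ≤ ∑ t ∈ Finset.range K, u σ t := h5
      _ ≤ ∑' t, u σ t := hpart

/-! ### Averaging over `σ` -/

lemma L_eq_filter : L σ hΔ = (Finset.univ.filter
    (fun x : Fin Δ => σ.symm (.inl x) < r0 σ hΔ)).card := by
  rw [L, P, Finset.filter_map, Finset.card_map]
  rfl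

end Main

section Avg

variable {Δ : ℕ} (hΔ : 0 < Δ)

def revE : (Fin (2 * Δ) ≃ (Fin Δ ⊕ Fin Δ)) ≃ (Fin (2 * Δ) ≃ (Fin Δ ⊕ Fin Δ)) where
  toFun σ := Fin.revPerm.trans σ
  invFun σ := Fin.revPerm.trans σ
  left_inv σ := by ext p; simp
  right_inv σ := by ext p; simp

lemma symm_revE (σ : Fin (2 * Δ) ≃ (Fin Δ ⊕ Fin Δ)) (v : Fin Δ ⊕ Fin Δ) :
    (revE σ).symm v = (σ.symm v).rev := by
  simp [revE]

lemma L_rev (σ : Fin (2 * Δ) ≃ (Fin Δ ⊕ Fin Δ)) :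
    L σ hΔ + L (revE σ) hΔ = Δ := by
  have hne : ∀ x : Fin Δ, σ.symm (.inl x) ≠ r0 σ hΔ := by
    intro x hx
    have := congrArg σ hx
    rw [Equiv.apply_symm_apply, r0, Equiv.apply_symm_apply] at this
    simp at this
  have hrev : ∀ x : Fin Δ, ((revE σ).symm (.inl x) < r0 (revE σ) hΔ ↔
      r0 σ hΔ < σ.symm (.inl x)) := by
    intro x
    rw [r0, symm_revE, symm_revE]
    rw [show r0 σ hΔ = σ.symm (.inr ⟨0, hΔ⟩) from rfl]
    exact Fin.rev_lt_rev
  rw [L_eq_filter, L_eq_filter]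
  have hcongr : (Finset.univ.filter
      (fun x : Fin Δ => (revE σ).symm (.inl x) < r0 (revE σ) hΔ)).card =
      (Finset.univ.filter (fun x : Fin Δ =>
        ¬ (σ.symm (.inl x) < r0 σ hΔ))).card := by
    congr 1
    apply Finset.filter_congr
    intro x _
    rw [hrev x]
    constructor
    · intro h
      exact not_lt.2 (le_of_lt h)
    · intro h
      rcases lt_or_eq_of_le (not_lt.1 h) with h' | h'
      · exact h'
      · exact absurd h'.symm (hne x)
  rw [hcongr, Finset.card_filter_add_card_filter_not]
  simp

lemma sum_L :
    2 * ∑ σ : Fin (2 * Δ) ≃ (Fin Δ ⊕ Fin Δ), L σ hΔ =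
      Fintype.card (Fin (2 * Δ) ≃ (Fin Δ ⊕ Fin Δ)) * Δ := by
  have h1 : ∑ σ : Fin (2 * Δ) ≃ (Fin Δ ⊕ Fin Δ), L σ hΔ =
      ∑ σ : Fin (2 * Δ) ≃ (Fin Δ ⊕ Fin Δ), L (revE σ) hΔ :=
    (Equiv.sum_comp revE (fun σ' => L σ' hΔ)).symm
  have h2 : 2 * ∑ σ : Fin (2 * Δ) ≃ (Fin Δ ⊕ Fin Δ), L σ hΔ =
      ∑ σ : Fin (2 * Δ) ≃ (Fin Δ ⊕ Fin Δ), (L σ hΔ + L (revE σ) hΔ) := by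
    rw [Finset.sum_add_distrib, ← h1]
    ring
  rw [h2, Finset.sum_congr rfl (fun σ _ => L_rev hΔ σ), Finset.sum_const,
    Finset.card_univ, smul_eq_mul]

end Avg

end PDC

/-- Adversarial-start lower bound for Persistent Decentralized Coloring: on the complete
bipartite graph `K_{Δ,Δ}` (with `n = 2Δ` and `Δ+1` colors), starting from the coloring
in which all left vertices get color `0` ("green") and the right vertices get the `Δ`
distinct colors `0,…,Δ-1` (including green), the expected total number of recolorings,
averaged over a uniformly random processing order, is at least `c·Δ² = Ω(nΔ)` for an
absolute constant `c > 0`. -/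
theorem stmt_19 :
    ∃ c : ℝ, 0 < c ∧ ∀ Δ : ℕ, 1 ≤ Δ →
      c * (Δ : ℝ) ^ 2 ≤
        (∑ σ : Fin (2 * Δ) ≃ (Fin Δ ⊕ Fin Δ),
            expectedTotal (completeBipartiteGraph (Fin Δ) (Fin Δ)) (2 * Δ) σ
              (Sum.elim (fun _ => (0 : Fin (Δ + 1))) (fun i => i.castSucc)))
          / (Fintype.card (Fin (2 * Δ) ≃ (Fin Δ ⊕ Fin Δ)) : ℝ) := by
  classical
  refine ⟨1 / 4, by norm_num, ?_⟩
  intro Δ hΔ'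
  have hΔ : 0 < Δ := hΔ'
  set E := Fintype.card (Fin (2 * Δ) ≃ (Fin Δ ⊕ Fin Δ)) with hE
  have hEpos : 0 < E := by
    rw [hE]
    apply Fintype.card_pos_iff.2
    exact ⟨(finCongr (two_mul Δ)).trans finSumFinEquiv.symm⟩
  have hEr : (0 : ℝ) < (E : ℝ) := by exact_mod_cast hEpos
  have hsumL : 2 * ∑ σ : Fin (2 * Δ) ≃ (Fin Δ ⊕ Fin Δ), PDC.L σ hΔ = E * Δ :=
    PDC.sum_L hΔ
  have hsumLr : ∑ σ : Fin (2 * Δ) ≃ (Fin Δ ⊕ Fin Δ), (PDC.L σ hΔ : ℝ) =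
      (E : ℝ) * (Δ : ℝ) / 2 := by
    have hc := congrArg (fun x : ℕ => (x : ℝ)) hsumL
    push_cast at hc
    linarith
  have hper : ∀ σ : Fin (2 * Δ) ≃ (Fin Δ ⊕ Fin Δ),
      (PDC.L σ hΔ : ℝ) * ((Δ : ℝ) + 1) / 2 ≤
        expectedTotal (completeBipartiteGraph (Fin Δ) (Fin Δ)) (2 * Δ) σ
          (Sum.elim (fun _ => (0 : Fin (Δ + 1))) (fun i => i.castSucc)) :=
    fun σ => PDC.expectedTotal_ge_L σ hΔ
  have hsum : (E : ℝ) * ((Δ : ℝ) ^ 2 / 4) ≤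
      ∑ σ : Fin (2 * Δ) ≃ (Fin Δ ⊕ Fin Δ),
        expectedTotal (completeBipartiteGraph (Fin Δ) (Fin Δ)) (2 * Δ) σ
          (Sum.elim (fun _ => (0 : Fin (Δ + 1))) (fun i => i.castSucc)) := by
    have h1 := Finset.sum_le_sum (fun σ _ => hper σ) (s := Finset.univ)
    have h2 : ∑ σ : Fin (2 * Δ) ≃ (Fin Δ ⊕ Fin Δ),
        (PDC.L σ hΔ : ℝ) * ((Δ : ℝ) + 1) / 2 =
        (((Δ : ℝ) + 1) / 2) * ((E : ℝ) * (Δ : ℝ) / 2) := by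
      have hterm : ∀ σ : Fin (2 * Δ) ≃ (Fin Δ ⊕ Fin Δ),
          (PDC.L σ hΔ : ℝ) * ((Δ : ℝ) + 1) / 2 =
          (((Δ : ℝ) + 1) / 2) * (PDC.L σ hΔ : ℝ) := fun σ => by ring
      rw [Finset.sum_congr rfl (fun σ _ => hterm σ), ← Finset.mul_sum, hsumLr]
    have hΔr : (1 : ℝ) ≤ (Δ : ℝ) := by exact_mod_cast hΔ'
    have h3 : (E : ℝ) * ((Δ : ℝ) ^ 2 / 4) ≤
        (((Δ : ℝ) + 1) / 2) * ((E : ℝ) * (Δ : ℝ) / 2) := by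
      nlinarith
    linarith
  rw [le_div_iff₀ hEr]
  calc (1 / 4 : ℝ) * (Δ : ℝ) ^ 2 * (E : ℝ) = (E : ℝ) * ((Δ : ℝ) ^ 2 / 4) := by ring
    _ ≤ _ := hsum
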